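/- Let Ω ⊆ ℂⁿ be open, and let φ₁ = c·log(∏ₖ |z_{i_k}|^{2α_k}) + g₁ and φ₂ = c·log(∏ₖ |w_{i_k}|^{2α_k}) + g₂, where g₁, g₂ are continuous on Ω, c > 0, α_k ≥ 0, and for each k we have w_{i_k} = u_k · z_{i_k} on Ω for nowhere-vanishing holomorphic functions u_k. Then φ₁ − φ₂ extends to a continuous function on Ω, and max(φ₁, φ₂) = c·log(∏ₖ |z_{i_k}|^{2α_k}) + g for some continuous function g on Ω. -/

import Mathlib

/-- Comparison of two functions with the same weakly analytic singularity type: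
if `φ₁ = c·log(∏ₖ |zₖ|^(2αₖ)) + g₁` and `φ₂ = c·log(∏ₖ |wₖ|^(2αₖ)) + g₂` with
`g₁, g₂` continuous on `Ω` and `wₖ = uₖ·zₖ` for nowhere-vanishing holomorphic `uₖ`,
then `φ₁ − φ₂` extends continuously over `Ω`, and `max(φ₁, φ₂)` equals
`c·log(∏ₖ |zₖ|^(2αₖ)) + g` for a continuous function `g` on `Ω`. -/
theorem stmt_13 {n m : ℕ} (Ω : Set (Fin n → ℂ)) (hΩ : IsOpen Ω)
    (z w u : Fin m → (Fin n → ℂ) → ℂ)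
    (hz : ∀ k, DifferentiableOn ℂ (z k) Ω)
    (hw : ∀ k, DifferentiableOn ℂ (w k) Ω)
    (hu : ∀ k, DifferentiableOn ℂ (u k) Ω)
    (hunit : ∀ k, ∀ x ∈ Ω, u k x ≠ 0)
    (hrel : ∀ k, ∀ x ∈ Ω, w k x = u k x * z k x)
    (c : ℝ) (hc : 0 < c) (α : Fin m → ℝ) (hα : ∀ k, 0 ≤ α k)
    (g₁ g₂ : (Fin n → ℂ) → ℝ)
    (hg₁ : ContinuousOn g₁ Ω) (hg₂ : ContinuousOn g₂ Ω)
    (φ₁ φ₂ : (Fin n → ℂ) → ℝ)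
    (hφ₁ : ∀ x ∈ Ω, φ₁ x =
      c * Real.log (∏ k, ‖z k x‖ ^ (2 * α k)) + g₁ x)
    (hφ₂ : ∀ x ∈ Ω, φ₂ x =
      c * Real.log (∏ k, ‖w k x‖ ^ (2 * α k)) + g₂ x) :
    (∃ F : (Fin n → ℂ) → ℝ, ContinuousOn F Ω ∧
      ∀ x ∈ Ω, (∀ k, z k x ≠ 0) → φ₁ x - φ₂ x = F x) ∧
    ∃ g : (Fin n → ℂ) → ℝ, ContinuousOn g Ω ∧
      ∀ x ∈ Ω, (∀ k, z k x ≠ 0) →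
        max (φ₁ x) (φ₂ x) =
          c * Real.log (∏ k, ‖z k x‖ ^ (2 * α k)) + g x := by
  set P : (Fin n → ℂ) → ℝ := fun x => ∏ k, ‖u k x‖ ^ (2 * α k) with hP
  have hPpos : ∀ x ∈ Ω, 0 < P x := fun x hx =>
    Finset.prod_pos fun k _ =>
      Real.rpow_pos_of_pos (norm_pos_iff.mpr (hunit k x hx)) _
  have hPcont : ContinuousOn P Ω := by
    apply continuousOn_finset_prod
    intro k _
    exact (continuous_norm.comp_continuousOn (hu k).continuousOn).rpow_const
      (fun x hx => Or.inl (norm_ne_zero_iff.mpr (hunit k x hx)))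
  have hlog : ContinuousOn (fun x => Real.log (P x)) Ω :=
    Real.continuousOn_log.comp hPcont fun x hx => (hPpos x hx).ne'
  -- key identity : log ∏|w|^{2α} = log P + log ∏|z|^{2α}
  have key : ∀ x ∈ Ω, (∀ k, z k x ≠ 0) →
      Real.log (∏ k, ‖w k x‖ ^ (2 * α k)) =
        Real.log (P x) + Real.log (∏ k, ‖z k x‖ ^ (2 * α k)) := by
    intro x hx hz0
    have hzpos : 0 < ∏ k, ‖z k x‖ ^ (2 * α k) :=
      Finset.prod_pos fun k _ => Real.rpow_pos_of_pos (norm_pos_iff.mpr (hz0 k)) _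
    have h1 : (∏ k, ‖w k x‖ ^ (2 * α k)) =
        P x * ∏ k, ‖z k x‖ ^ (2 * α k) := by
      rw [hP, ← Finset.prod_mul_distrib]
      refine Finset.prod_congr rfl fun k _ => ?_
      rw [hrel k x hx, norm_mul,
        Real.mul_rpow (norm_nonneg _) (norm_nonneg _)]
    rw [h1, Real.log_mul (hPpos x hx).ne' hzpos.ne']
  refine ⟨⟨fun x => g₁ x - g₂ x - c * Real.log (P x),
    (hg₁.sub hg₂).sub (hlog.const_smul c), ?_⟩,
    fun x => max (g₁ x) (g₂ x + c * Real.log (P x)),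
    (hg₁.sup' (hg₂.add (hlog.const_smul c))), ?_⟩
  · intro x hx hz0
    rw [hφ₁ x hx, hφ₂ x hx, key x hx hz0]
    ring
  · intro x hx hz0
    rw [hφ₁ x hx, hφ₂ x hx, key x hx hz0]
    rw [max_comm]
    rw [show c * (Real.log (P x) + Real.log (∏ k, ‖z k x‖ ^ (2 * α k)))
        + g₂ x = c * Real.log (∏ k, ‖z k x‖ ^ (2 * α k)) +
        (g₂ x + c * Real.log (P x)) by ring]
    rw [max_add_add_left, max_comm]
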